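/- Suppose preferences over pairs of actions are generated by a Bradley–Terry model p(a_w ≻ a_l) = σ(Q(a_w) − Q(a_l)) for some Q : A → ℝ on a finite set A. Then the policy π parametrized implicitly via r_π(a) := β·log(π(a)/π_ref(a)) that minimizes the expected DPO loss E[−log σ(r_π(a_w) − r_π(a_l))] over all fully supported π (where preferences and pairs are drawn with every unordered pair having positive probability) satisfies π(a) ∝ π_ref(a)·exp(Q(a)/β). -/

import Mathlib

open Classical

noncomputable def logistic (x : ℝ) : ℝ := 1 / (1 + Real.exp (-x))

/-- Implicit reward of a policy: `r_π(a) = β·log(π(a)/π_ref(a))`. -/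
noncomputable def implicitReward (β : ℝ) (πref π : A → ℝ) (a : A) : ℝ :=
  β * Real.log (π a / πref a)

/-- Expected DPO loss under a Bradley–Terry preference model with scores `Q`,
where unordered pairs `(a,b)` (a ≠ b) are sampled with probability weight `μ a b`. -/
noncomputable def expectedDPOLoss {A : Type*} [Fintype A]
    (β : ℝ) (πref : A → ℝ) (Q : A → ℝ) (μ : A → A → ℝ) (π : A → ℝ) : ℝ :=
  ∑ a, ∑ b, if a ≠ b then
    μ a b *
      (logistic (Q a - Q b) *
          (-Real.log (logistic (implicitReward β πref π a - implicitReward β πref π b))) +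
        logistic (Q b - Q a) *
          (-Real.log (logistic (implicitReward β πref π b - implicitReward β πref π a))))
  else 0


lemma logistic_pos (x : ℝ) : 0 < logistic x := by unfold logistic; positivity

lemma logistic_lt_one (x : ℝ) : logistic x < 1 := by
  unfold logistic
  rw [div_lt_one (by positivity)]
  linarith [Real.exp_pos (-x)]

lemma logistic_neg (x : ℝ) : logistic (-x) = 1 - logistic x := by
  unfold logistic
  have h1 : (0:ℝ) < 1 + Real.exp (-x) := by positivity
  have h2 : (0:ℝ) < 1 + Real.exp x := by positivity
  have hm : Real.exp x * Real.exp (-x) = 1 := by rw [← Real.exp_add]; simp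
  rw [neg_neg]
  field_simp
  nlinarith [hm]

lemma logistic_inj {x y : ℝ} (h : logistic x = logistic y) : x = y := by
  unfold logistic at h
  have hx : (0:ℝ) < 1 + Real.exp (-x) := by positivity
  have hy : (0:ℝ) < 1 + Real.exp (-y) := by positivity
  rw [div_eq_div_iff hx.ne' hy.ne'] at h
  have he : Real.exp (-x) = Real.exp (-y) := by linarith
  have := Real.exp_injective he
  linarith

lemma gibbs_le {p q : ℝ} (hp0 : 0 < p) (hp1 : p < 1) (hq0 : 0 < q) (hq1 : q < 1) :
    p * (-Real.log p) + (1 - p) * (-Real.log (1 - p)) ≤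
      p * (-Real.log q) + (1 - p) * (-Real.log (1 - q)) := by
  have h1 : Real.log (q / p) ≤ q / p - 1 := Real.log_le_sub_one_of_pos (by positivity)
  have h2 : Real.log ((1 - q) / (1 - p)) ≤ (1 - q) / (1 - p) - 1 :=
    Real.log_le_sub_one_of_pos (by apply div_pos <;> linarith)
  rw [Real.log_div hq0.ne' hp0.ne'] at h1
  rw [Real.log_div (by linarith) (by linarith)] at h2
  have e1 : p * (Real.log q - Real.log p) ≤ q - p := by
    have h := mul_le_mul_of_nonneg_left h1 hp0.le
    have h' : p * (q / p - 1) = q - p := by field_simp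
    linarith
  have e2 : (1 - p) * (Real.log (1 - q) - Real.log (1 - p)) ≤ p - q := by
    have h := mul_le_mul_of_nonneg_left h2 (by linarith : (0:ℝ) ≤ 1 - p)
    have h' : (1 - p) * ((1 - q) / (1 - p) - 1) = p - q := by
      rw [mul_sub, mul_one, mul_div_cancel₀ _ (show (1:ℝ) - p ≠ 0 by linarith)]; ring
    linarith
  nlinarith [e1, e2]

lemma gibbs_lt {p q : ℝ} (hp0 : 0 < p) (hp1 : p < 1) (hq0 : 0 < q) (hq1 : q < 1)
    (hne : q ≠ p) :
    p * (-Real.log p) + (1 - p) * (-Real.log (1 - p)) <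
      p * (-Real.log q) + (1 - p) * (-Real.log (1 - q)) := by
  have hqp : q / p ≠ 1 := by
    rw [Ne, div_eq_one_iff_eq hp0.ne']; exact hne
  have h1 : Real.log (q / p) < q / p - 1 := Real.log_lt_sub_one_of_pos (by positivity) hqp
  have h2 : Real.log ((1 - q) / (1 - p)) ≤ (1 - q) / (1 - p) - 1 :=
    Real.log_le_sub_one_of_pos (by apply div_pos <;> linarith)
  rw [Real.log_div hq0.ne' hp0.ne'] at h1
  rw [Real.log_div (by linarith) (by linarith)] at h2
  have e1 : p * (Real.log q - Real.log p) < q - p := by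
    have h := (mul_lt_mul_iff_right₀ hp0).mpr h1
    have h' : p * (q / p - 1) = q - p := by field_simp
    linarith
  have e2 : (1 - p) * (Real.log (1 - q) - Real.log (1 - p)) ≤ p - q := by
    have h := mul_le_mul_of_nonneg_left h2 (by linarith : (0:ℝ) ≤ 1 - p)
    have h' : (1 - p) * ((1 - q) / (1 - p) - 1) = p - q := by
      rw [mul_sub, mul_one, mul_div_cancel₀ _ (show (1:ℝ) - p ≠ 0 by linarith)]; ring
    linarith
  nlinarith [e1, e2]

lemma pair_le (t d : ℝ) :
    logistic t * (-Real.log (logistic t)) + logistic (-t) * (-Real.log (logistic (-t))) ≤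
      logistic t * (-Real.log (logistic d)) + logistic (-t) * (-Real.log (logistic (-d))) := by
  rw [logistic_neg t, logistic_neg d]
  exact gibbs_le (logistic_pos t) (logistic_lt_one t) (logistic_pos d) (logistic_lt_one d)

lemma pair_lt (t d : ℝ) (hne : d ≠ t) :
    logistic t * (-Real.log (logistic t)) + logistic (-t) * (-Real.log (logistic (-t))) <
      logistic t * (-Real.log (logistic d)) + logistic (-t) * (-Real.log (logistic (-d))) := by
  rw [logistic_neg t, logistic_neg d]
  exact gibbs_lt (logistic_pos t) (logistic_lt_one t) (logistic_pos d) (logistic_lt_one d)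
    (fun h => hne (logistic_inj h))

theorem dpo_minimizer_is_soft_optimal {A : Type*} [Fintype A]
    (hcard : 2 ≤ Fintype.card A)
    (πref : A → ℝ) (hrefpos : ∀ a, 0 < πref a) (hrefsum : ∑ a, πref a = 1)
    (Q : A → ℝ) (β : ℝ) (hβ : 0 < β)
    (μ : A → A → ℝ) (hμ : ∀ a b, a ≠ b → 0 < μ a b)
    (π : A → ℝ) (hπpos : ∀ a, 0 < π a) (hπsum : ∑ a, π a = 1)
    (hmin : ∀ π' : A → ℝ, (∀ a, 0 < π' a) → (∑ a, π' a = 1) →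
      expectedDPOLoss β πref Q μ π ≤ expectedDPOLoss β πref Q μ π') :
    ∃ c : ℝ, 0 < c ∧ ∀ a, π a = c * (πref a * Real.exp (Q a / β)) := by
  have hβ' : β ≠ 0 := hβ.ne'
  obtain ⟨a0⟩ : Nonempty A := Fintype.card_pos_iff.mp (by omega)
  set Z : ℝ := ∑ b, πref b * Real.exp (Q b / β) with hZdef
  have hZ : 0 < Z := Finset.sum_pos (fun b _ => mul_pos (hrefpos b) (Real.exp_pos _)) ⟨a0, Finset.mem_univ a0⟩
  set π' : A → ℝ := fun a => πref a * Real.exp (Q a / β) / Z with hπ'def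
  have hπ'pos : ∀ a, 0 < π' a := fun a => div_pos (mul_pos (hrefpos a) (Real.exp_pos _)) hZ
  have hπ'sum : ∑ a, π' a = 1 := by
    simp only [hπ'def]
    rw [← Finset.sum_div, div_self hZ.ne']
  have hlog' : ∀ a, Real.log (π' a / πref a) = Q a / β - Real.log Z := by
    intro a
    have h1 : π' a / πref a = Real.exp (Q a / β) / Z := by
      simp only [hπ'def]
      rw [mul_div_assoc, mul_div_cancel_left₀ _ (hrefpos a).ne']
    rw [h1, Real.log_div (Real.exp_ne_zero _) hZ.ne', Real.log_exp]
  have hr' : ∀ a b, implicitReward β πref π' a - implicitReward β πref π' b = Q a - Q b := by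
    intro a b
    unfold implicitReward
    rw [hlog' a, hlog' b]
    field_simp
    ring
  -- key: implicit reward differences of π match Q differences
  have key : ∀ a b, a ≠ b →
      implicitReward β πref π a - implicitReward β πref π b = Q a - Q b := by
    by_contra hcon
    push_neg at hcon
    obtain ⟨x, y, hxy, hne⟩ := hcon
    set G : (A → ℝ) → A → A → ℝ := fun ρ a b => if a ≠ b then
      μ a b *
        (logistic (Q a - Q b) *
            (-Real.log (logistic (implicitReward β πref ρ a - implicitReward β πref ρ b))) +
          logistic (Q b - Q a) *
            (-Real.log (logistic (implicitReward β πref ρ b - implicitReward β πref ρ a))))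
      else 0 with hGdef
    have hG : ∀ ρ, expectedDPOLoss β πref Q μ ρ = ∑ a, ∑ b, G ρ a b := fun ρ => rfl
    have hGle : ∀ a b, G π' a b ≤ G π a b := by
      intro a b
      by_cases hab : a = b
      · simp [hGdef, hab]
      · simp only [hGdef, if_pos (hab : a ≠ b)]
        apply mul_le_mul_of_nonneg_left _ (hμ a b hab).le
        rw [hr' a b, hr' b a]
        have h1 : Q b - Q a = -(Q a - Q b) := by ring
        have h2 : implicitReward β πref π b - implicitReward β πref π a =
            -(implicitReward β πref π a - implicitReward β πref π b) := by ring
        rw [h1, h2]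
        exact pair_le (Q a - Q b) _
    have hGlt : G π' x y < G π x y := by
      simp only [hGdef, if_pos hxy]
      apply (mul_lt_mul_iff_right₀ (hμ x y hxy)).mpr
      rw [hr' x y, hr' y x]
      have h1 : Q y - Q x = -(Q x - Q y) := by ring
      have h2 : implicitReward β πref π y - implicitReward β πref π x =
          -(implicitReward β πref π x - implicitReward β πref π y) := by ring
      rw [h1, h2]
      exact pair_lt (Q x - Q y) _ hne
    have hlt : expectedDPOLoss β πref Q μ π' < expectedDPOLoss β πref Q μ π := by
      rw [hG π', hG π]
      exact Finset.sum_lt_sum (fun a _ => Finset.sum_le_sum (fun b _ => hGle a b))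
        ⟨x, Finset.mem_univ x,
          Finset.sum_lt_sum (fun b _ => hGle x b) ⟨y, Finset.mem_univ y, hGlt⟩⟩
    linarith [hmin π' hπ'pos hπ'sum]
  -- conclude proportionality
  refine ⟨π a0 / (πref a0 * Real.exp (Q a0 / β)),
    div_pos (hπpos a0) (mul_pos (hrefpos a0) (Real.exp_pos _)), ?_⟩
  intro a
  by_cases ha : a = a0
  · subst ha
    rw [div_mul_cancel₀ _ (mul_pos (hrefpos a) (Real.exp_pos _)).ne']
  · have E := key a a0 ha
    unfold implicitReward at E
    have hlog : Real.log (π a / πref a) - Real.log (π a0 / πref a0) = (Q a - Q a0) / β := by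
      rw [eq_div_iff hβ']; linarith [E]
    have hpa : 0 < π a / πref a := div_pos (hπpos a) (hrefpos a)
    have hpa0 : 0 < π a0 / πref a0 := div_pos (hπpos a0) (hrefpos a0)
    have hx : π a / πref a = (π a0 / πref a0) * Real.exp ((Q a - Q a0) / β) := by
      rw [← Real.exp_log hpa, ← Real.exp_log hpa0, ← Real.exp_add]
      congr 1
      linarith [hlog]
    have hsplit : Real.exp ((Q a - Q a0) / β) = Real.exp (Q a / β) / Real.exp (Q a0 / β) := by
      rw [← Real.exp_sub]; congr 1; ring
    rw [div_eq_iff (hrefpos a).ne'] at hx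
    rw [hx, hsplit]
    field_simp
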